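/- (Pointwise Ergodic Theorem) Let (X, ℬ, μ) be a probability space, T : X → X a measure-preserving transformation, and f ∈ L¹(μ). Then the sequence of Birkhoff averages A_k f = (1/k) Σ_{j=0}^{k−1} f∘T^j converges μ-almost everywhere (to a finite limit) as k → ∞. -/

import Mathlib

open MeasureTheory Filter
open Set

namespace BirkhoffAux

variable {X : Type*} [MeasurableSpace X] {μ : Measure X} {T : X → X} {g : X → ℝ}

/-- `maxF T g N x = max (0, S₁ g x, ..., S_N g x)` defined recursively. -/
noncomputable def maxF (T : X → X) (g : X → ℝ) : ℕ → X → ℝ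
  | 0 => fun _ => 0
  | (N + 1) => fun x => max 0 (g x + maxF T g N (T x))

lemma maxF_nonneg (N : ℕ) (x : X) : 0 ≤ maxF T g N x := by
  cases N with
  | zero => exact le_refl _
  | succ N => exact le_max_left _ _

lemma maxF_succ_le (N : ℕ) (x : X) : maxF T g N x ≤ maxF T g (N + 1) x := by
  induction N generalizing x with
  | zero => exact maxF_nonneg _ _
  | succ N ih =>
    exact max_le (le_max_left _ _)
      (le_max_of_le_right (add_le_add le_rfl (ih (T x))))

lemma maxF_mono (x : X) : Monotone fun N => maxF T g N x := by
  refine monotone_nat_of_le_succ fun N => maxF_succ_le N x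

lemma birkhoffSum_le_maxF (n : ℕ) (x : X) :
    birkhoffSum T g (n + 1) x ≤ maxF T g (n + 1) x := by
  induction n generalizing x with
  | zero => simpa [birkhoffSum_one, maxF] using le_max_right (0:ℝ) (g x + 0)
  | succ n ih =>
    rw [birkhoffSum_succ']
    exact le_max_of_le_right (add_le_add le_rfl (ih (T x)))

lemma measurable_maxF (hT : Measurable T) (hg : Measurable g) (N : ℕ) :
    Measurable (maxF T g N) := by
  induction N with
  | zero => exact measurable_const
  | succ N ih => exact measurable_const.max (hg.add (ih.comp hT))

lemma integrable_maxF [IsFiniteMeasure μ] (hT : MeasurePreserving T μ μ)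
    (hg : Integrable g μ) (N : ℕ) : Integrable (maxF T g N) μ := by
  induction N with
  | zero => exact integrable_const 0
  | succ N ih =>
    have h2 : Integrable (fun x => g x + maxF T g N (T x)) μ :=
      hg.add (memLp_one_iff_integrable.1
        ((memLp_one_iff_integrable.2 ih).comp_measurePreserving hT))
    have := (integrable_const (0:ℝ)).sup h2
    simpa [Pi.sup_def, maxF] using this

/-- Integral of a composition with a measure preserving map. -/
lemma integral_comp_mp (hT : MeasurePreserving T μ μ) (h : X → ℝ)
    (hm : AEStronglyMeasurable h μ) : ∫ x, h (T x) ∂μ = ∫ x, h x ∂μ := by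
  rw [← integral_map hT.measurable.aemeasurable (by rwa [hT.map_eq]), hT.map_eq]

/-- **Maximal ergodic lemma.** -/
theorem maximal_ergodic [IsFiniteMeasure μ] (hT : MeasurePreserving T μ μ)
    (hTm : Measurable T) (hgm : Measurable g) (hg : Integrable g μ) (N : ℕ) :
    0 ≤ ∫ x in {x | 0 < maxF T g (N + 1) x}, g x ∂μ := by
  set E : Set X := {x | 0 < maxF T g (N + 1) x} with hE
  have hEm : MeasurableSet E := measurableSet_lt measurable_const
    (measurable_maxF hTm hgm (N + 1))
  have hMi : Integrable (maxF T g (N + 1)) μ := integrable_maxF hT hg (N + 1)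
  have hMTi : Integrable (fun x => maxF T g (N + 1) (T x)) μ :=
    memLp_one_iff_integrable.1
      ((memLp_one_iff_integrable.2 hMi).comp_measurePreserving hT)
  -- pointwise bound on E
  have key : ∀ x ∈ E, maxF T g (N + 1) x - maxF T g (N + 1) (T x) ≤ g x := by
    intro x hx
    have h1 : maxF T g (N + 1) x = g x + maxF T g N (T x) := by
      have : (0:ℝ) < max 0 (g x + maxF T g N (T x)) := hx
      have hne : max 0 (g x + maxF T g N (T x)) = g x + maxF T g N (T x) :=
        max_eq_right (by by_contra hc; push_neg at hc
                         simp [max_eq_left hc.le] at this)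
      simpa [maxF] using hne
    have h2 : maxF T g N (T x) ≤ maxF T g (N + 1) (T x) := maxF_succ_le N (T x)
    linarith
  have step1 : ∫ x in E, (maxF T g (N + 1) x - maxF T g (N + 1) (T x)) ∂μ
      ≤ ∫ x in E, g x ∂μ :=
    setIntegral_mono_on (hMi.sub hMTi).integrableOn hg.integrableOn hEm key
  have e1 : ∫ x in E, maxF T g (N + 1) x ∂μ = ∫ x, maxF T g (N + 1) x ∂μ := by
    rw [← integral_add_compl hEm hMi]
    have : ∫ x in Eᶜ, maxF T g (N + 1) x ∂μ = 0 := by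
      refine setIntegral_eq_zero_of_forall_eq_zero fun x hx => ?_
      have : ¬ 0 < maxF T g (N + 1) x := hx
      exact le_antisymm (not_lt.1 this) (maxF_nonneg _ _)
    rw [this, add_zero]
  have e2 : ∫ x in E, maxF T g (N + 1) (T x) ∂μ ≤ ∫ x, maxF T g (N + 1) (T x) ∂μ :=
    setIntegral_le_integral hMTi
      (Eventually.of_forall fun x => maxF_nonneg _ _)
  have e3 : ∫ x, maxF T g (N + 1) (T x) ∂μ = ∫ x, maxF T g (N + 1) x ∂μ :=
    integral_comp_mp hT _ hMi.aestronglyMeasurable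
  have split : ∫ x in E, (maxF T g (N + 1) x - maxF T g (N + 1) (T x)) ∂μ
      = ∫ x in E, maxF T g (N + 1) x ∂μ - ∫ x in E, maxF T g (N + 1) (T x) ∂μ :=
    integral_sub hMi.integrableOn hMTi.integrableOn
  have : (0:ℝ) ≤ ∫ x in E, (maxF T g (N + 1) x - maxF T g (N + 1) (T x)) ∂μ := by
    rw [split, e1]
    linarith [e2, e3]
  linarith [step1]

end BirkhoffAux

namespace BirkhoffAux
variable {X : Type*} [MeasurableSpace X] {μ : Measure X} {T : X → X} {g : X → ℝ}

lemma restrict_measurePreserving (hT : MeasurePreserving T μ μ) {E : Set X}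
    (hEm : MeasurableSet E) (hTE : T ⁻¹' E = E) :
    MeasurePreserving T (μ.restrict E) (μ.restrict E) := by
  refine ⟨hT.measurable, ?_⟩
  conv_lhs => rw [← hTE]
  rw [← Measure.restrict_map hT.measurable hEm, hT.map_eq]

/-- Maximal ergodic theorem on an invariant set where the maximal function is
eventually positive everywhere. -/
theorem maximal_ergodic_invariant [IsFiniteMeasure μ] (hT : MeasurePreserving T μ μ)
    (hgm : Measurable g) (hg : Integrable g μ) {E : Set X}
    (hEm : MeasurableSet E) (hTE : T ⁻¹' E = E)
    (hpos : ∀ x ∈ E, ∃ n : ℕ, 0 < birkhoffSum T g (n + 1) x) :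
    0 ≤ ∫ x in E, g x ∂μ := by
  set ν := μ.restrict E with hν
  have hTν : MeasurePreserving T ν ν := restrict_measurePreserving hT hEm hTE
  have hgν : Integrable g ν := hg.restrict
  set s : ℕ → Set X := fun N => {x | 0 < maxF T g (N + 1) x} ∩ E with hs
  have hsm : ∀ N, MeasurableSet (s N) := fun N =>
    (measurableSet_lt measurable_const (measurable_maxF hT.measurable hgm (N + 1))).inter hEm
  have hsmono : Monotone s := by
    refine monotone_nat_of_le_succ fun N => inter_subset_inter_left _ ?_
    intro x hx
    exact lt_of_lt_of_le hx (maxF_succ_le _ _)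
  have hsunion : (⋃ N, s N) = E := by
    apply subset_antisymm
    · exact iUnion_subset fun N => inter_subset_right
    · intro x hx
      obtain ⟨n, hn⟩ := hpos x hx
      exact mem_iUnion.2 ⟨n, ⟨lt_of_lt_of_le hn (birkhoffSum_le_maxF n x), hx⟩⟩
  have hnonneg : ∀ N, 0 ≤ ∫ x in s N, g x ∂μ := by
    intro N
    have h0 : 0 ≤ ∫ x in {x | 0 < maxF T g (N + 1) x}, g x ∂ν :=
      maximal_ergodic hTν hT.measurable hgm hgν N
    rwa [hν, Measure.restrict_restrict
      (measurableSet_lt measurable_const (measurable_maxF hT.measurable hgm (N + 1)))] at h0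
  have htend : Tendsto (fun N => ∫ x in s N, g x ∂μ) atTop (nhds (∫ x in E, g x ∂μ)) := by
    have := tendsto_setIntegral_of_monotone hsm hsmono (by rw [hsunion]; exact hg.integrableOn)
    rwa [hsunion] at this
  exact ge_of_tendsto' htend hnonneg

end BirkhoffAux

namespace BirkhoffAux

section Shift

lemma ereal_limsup_le_shift {u v c d : ℕ → ℝ}
    (hc : Tendsto c atTop (nhds 1)) (hcpos : ∀ᶠ k in atTop, 0 < c k)
    (hd : Tendsto d atTop (nhds 0))
    (hv : ∀ᶠ k in atTop, v k = c k * u k + d k) :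
    limsup (fun k => ((v k : ℝ) : EReal)) atTop
      ≤ limsup (fun k => ((u k : ℝ) : EReal)) atTop := by
  by_contra hlt
  push_neg at hlt
  obtain ⟨b, hub, hbv⟩ := EReal.exists_rat_btwn_of_lt hlt
  obtain ⟨b2, hub2, hb2b⟩ := EReal.exists_rat_btwn_of_lt hub
  have hu2 : ∀ᶠ k in atTop, (u k : EReal) < (b2 : ℝ) := by
    simpa using eventually_lt_of_limsup_lt hub2
  have htend : Tendsto (fun k => c k * (b2 : ℝ) + d k) atTop (nhds ((b2:ℝ))) := by
    have := (hc.mul_const ((b2:ℚ):ℝ)).add hd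
    simpa using this
  have hb2b' : ((b2:ℚ):ℝ) < ((b:ℚ):ℝ) := by exact_mod_cast hb2b
  have hev : ∀ᶠ k in atTop, c k * (b2 : ℝ) + d k < (b : ℝ) :=
    htend.eventually (eventually_lt_nhds hb2b')
  have hvb : ∀ᶠ k in atTop, ((v k : ℝ) : EReal) ≤ ((b:ℚ):ℝ) := by
    filter_upwards [hu2, hev, hv, hcpos] with k h1 h2 h3 h4
    have h1' : u k < ((b2:ℚ):ℝ) := by exact_mod_cast h1
    have : v k ≤ c k * (b2 : ℝ) + d k := by
      rw [h3]
      have := mul_le_mul_of_nonneg_left h1'.le h4.le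
      linarith
    have : v k < ((b:ℚ):ℝ) := lt_of_le_of_lt this h2
    exact_mod_cast this.le
  have : limsup (fun k => ((v k : ℝ) : EReal)) atTop ≤ ((b:ℚ):ℝ) :=
    limsup_le_of_le (by isBoundedDefault) hvb
  exact absurd (lt_of_le_of_lt this hbv) (lt_irrefl _)

lemma ereal_le_liminf_shift {u v c d : ℕ → ℝ}
    (hc : Tendsto c atTop (nhds 1)) (hcpos : ∀ᶠ k in atTop, 0 < c k)
    (hd : Tendsto d atTop (nhds 0))
    (hv : ∀ᶠ k in atTop, v k = c k * u k + d k) :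
    liminf (fun k => ((u k : ℝ) : EReal)) atTop
      ≤ liminf (fun k => ((v k : ℝ) : EReal)) atTop := by
  by_contra hlt
  push_neg at hlt
  obtain ⟨b, hvb, hbu⟩ := EReal.exists_rat_btwn_of_lt hlt
  obtain ⟨b2, hbb2, hb2u⟩ := EReal.exists_rat_btwn_of_lt hbu
  have hu2 : ∀ᶠ k in atTop, ((b2:ℚ):ℝ) < (u k : EReal) := by
    simpa using eventually_lt_of_lt_liminf hb2u
  have htend : Tendsto (fun k => c k * ((b2:ℚ) : ℝ) + d k) atTop (nhds (((b2:ℚ)):ℝ)) := by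
    have := (hc.mul_const ((b2:ℚ):ℝ)).add hd
    simpa using this
  have hbb2' : ((b:ℚ):ℝ) < ((b2:ℚ):ℝ) := by exact_mod_cast hbb2
  have hev : ∀ᶠ k in atTop, ((b:ℚ):ℝ) < c k * ((b2:ℚ) : ℝ) + d k :=
    htend.eventually (eventually_gt_nhds hbb2')
  have hvb' : ∀ᶠ k in atTop, ((b:ℚ):ℝ) ≤ ((v k : ℝ) : EReal) := by
    filter_upwards [hu2, hev, hv, hcpos] with k h1 h2 h3 h4
    have h1' : ((b2:ℚ):ℝ) < u k := by exact_mod_cast h1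
    have : c k * ((b2:ℚ) : ℝ) + d k ≤ v k := by
      rw [h3]
      have := mul_le_mul_of_nonneg_left h1'.le h4.le
      linarith
    have : ((b:ℚ):ℝ) < v k := lt_of_lt_of_le h2 this
    exact_mod_cast this.le
  have : ((b:ℚ):ℝ) ≤ liminf (fun k => ((v k : ℝ) : EReal)) atTop :=
    le_liminf_of_le (by isBoundedDefault) hvb'
  exact absurd (lt_of_le_of_lt this hvb) (lt_irrefl _)

lemma shift_inv {u v c d : ℕ → ℝ}
    (hc : Tendsto c atTop (nhds 1)) (hcpos : ∀ᶠ k in atTop, 0 < c k)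
    (hd : Tendsto d atTop (nhds 0))
    (hv : ∀ᶠ k in atTop, v k = c k * u k + d k) :
    (Tendsto (fun k => (c k)⁻¹) atTop (nhds 1) ∧
      (∀ᶠ k in atTop, 0 < (c k)⁻¹) ∧
      Tendsto (fun k => -(d k) / c k) atTop (nhds 0) ∧
      ∀ᶠ k in atTop, u k = (c k)⁻¹ * v k + (-(d k) / c k)) := by
  refine ⟨by simpa using hc.inv₀ one_ne_zero, hcpos.mono fun k hk => inv_pos.2 hk,
    by have := hd.neg.div hc one_ne_zero; simp only [neg_zero, zero_div] at this; exact this, ?_⟩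
  filter_upwards [hv, hcpos] with k h1 h2
  field_simp [h1]
  rw [h1]; ring

lemma ereal_limsup_shift_eq {u v c d : ℕ → ℝ}
    (hc : Tendsto c atTop (nhds 1)) (hcpos : ∀ᶠ k in atTop, 0 < c k)
    (hd : Tendsto d atTop (nhds 0))
    (hv : ∀ᶠ k in atTop, v k = c k * u k + d k) :
    limsup (fun k => ((v k : ℝ) : EReal)) atTop
      = limsup (fun k => ((u k : ℝ) : EReal)) atTop := by
  obtain ⟨h1, h2, h3, h4⟩ := shift_inv hc hcpos hd hv
  exact le_antisymm (ereal_limsup_le_shift hc hcpos hd hv)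
    (ereal_limsup_le_shift h1 h2 h3 h4)

lemma ereal_liminf_shift_eq {u v c d : ℕ → ℝ}
    (hc : Tendsto c atTop (nhds 1)) (hcpos : ∀ᶠ k in atTop, 0 < c k)
    (hd : Tendsto d atTop (nhds 0))
    (hv : ∀ᶠ k in atTop, v k = c k * u k + d k) :
    liminf (fun k => ((v k : ℝ) : EReal)) atTop
      = liminf (fun k => ((u k : ℝ) : EReal)) atTop := by
  obtain ⟨h1, h2, h3, h4⟩ := shift_inv hc hcpos hd hv
  exact le_antisymm (ereal_le_liminf_shift h1 h2 h3 h4)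
    (ereal_le_liminf_shift hc hcpos hd hv)

end Shift

end BirkhoffAux

namespace BirkhoffAux

variable {X : Type*} {T : X → X}

lemma cast_mul_birkhoffAverage (f : X → ℝ) (k : ℕ) (y : X) :
    (k : ℝ) * birkhoffAverage ℝ T f k y = birkhoffSum T f k y := by
  rcases Nat.eq_zero_or_pos k with hk | hk
  · simp [hk]
  · rw [birkhoffAverage, smul_eq_mul, ← mul_assoc,
      mul_inv_cancel₀ (Nat.cast_ne_zero.2 hk.ne'), one_mul]

lemma birkhoffAverage_succ_eq (f : X → ℝ) (x : X) (k : ℕ) :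
    birkhoffAverage ℝ T f (k + 1) x
      = ((k : ℝ) * ((k : ℝ) + 1)⁻¹) * birkhoffAverage ℝ T f k (T x)
        + ((k : ℝ) + 1)⁻¹ * f x := by
  have h : birkhoffSum T f (k + 1) x = f x + birkhoffSum T f k (T x) :=
    birkhoffSum_succ' T f k x
  rw [birkhoffAverage, h, ← cast_mul_birkhoffAverage f k (T x), smul_eq_mul]
  push_cast
  ring

lemma tendsto_c : Tendsto (fun k : ℕ => (k : ℝ) * ((k : ℝ) + 1)⁻¹) atTop (nhds 1) := by
  have h0 : Tendsto (fun k : ℕ => ((k : ℝ) + 1)⁻¹) atTop (nhds 0) := by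
    simpa [one_div] using tendsto_one_div_add_atTop_nhds_zero_nat (𝕜 := ℝ)
  have h1 : Tendsto (fun k : ℕ => 1 - ((k : ℝ) + 1)⁻¹) atTop (nhds 1) := by
    simpa using ((tendsto_const_nhds :
      Tendsto (fun _ : ℕ => (1:ℝ)) atTop (nhds 1)).sub h0)
  refine h1.congr fun k => ?_
  have hne : (k : ℝ) + 1 ≠ 0 := by positivity
  field_simp
  ring

lemma tendsto_d (r : ℝ) :
    Tendsto (fun k : ℕ => ((k : ℝ) + 1)⁻¹ * r) atTop (nhds 0) := by
  have h0 : Tendsto (fun k : ℕ => ((k : ℝ) + 1)⁻¹) atTop (nhds 0) := by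
    simpa [one_div] using tendsto_one_div_add_atTop_nhds_zero_nat (𝕜 := ℝ)
  simpa using h0.mul_const r

lemma c_pos : ∀ᶠ k : ℕ in atTop, 0 < (k : ℝ) * ((k : ℝ) + 1)⁻¹ := by
  filter_upwards [eventually_ge_atTop 1] with k hk
  have : (0:ℝ) < k := by exact_mod_cast hk
  positivity

lemma limsup_comp (f : X → ℝ) (x : X) :
    limsup (fun k => ((birkhoffAverage ℝ T f k (T x) : ℝ) : EReal)) atTop
      = limsup (fun k => ((birkhoffAverage ℝ T f k x : ℝ) : EReal)) atTop := by
  have h1 : limsup (fun k => ((birkhoffAverage ℝ T f k x : ℝ) : EReal)) atTop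
      = limsup (fun k => ((birkhoffAverage ℝ T f (k + 1) x : ℝ) : EReal)) atTop :=
    (limsup_nat_add (fun k => ((birkhoffAverage ℝ T f k x : ℝ) : EReal)) 1).symm
  rw [h1]
  exact (ereal_limsup_shift_eq tendsto_c c_pos (tendsto_d (f x))
    (Eventually.of_forall fun k => birkhoffAverage_succ_eq f x k)).symm

lemma liminf_comp (f : X → ℝ) (x : X) :
    liminf (fun k => ((birkhoffAverage ℝ T f k (T x) : ℝ) : EReal)) atTop
      = liminf (fun k => ((birkhoffAverage ℝ T f k x : ℝ) : EReal)) atTop := by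
  have h1 : liminf (fun k => ((birkhoffAverage ℝ T f k x : ℝ) : EReal)) atTop
      = liminf (fun k => ((birkhoffAverage ℝ T f (k + 1) x : ℝ) : EReal)) atTop :=
    (liminf_nat_add (fun k => ((birkhoffAverage ℝ T f k x : ℝ) : EReal)) 1).symm
  rw [h1]
  exact (ereal_liminf_shift_eq tendsto_c c_pos (tendsto_d (f x))
    (Eventually.of_forall fun k => birkhoffAverage_succ_eq f x k)).symm

end BirkhoffAux

namespace BirkhoffAux

variable {X : Type*} [MeasurableSpace X] {μ : Measure X} {T : X → X}

lemma measurable_birkhoffSum (hTm : Measurable T) {f : X → ℝ} (hfm : Measurable f)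
    (n : ℕ) : Measurable fun x => birkhoffSum T f n x := by
  unfold birkhoffSum
  exact Finset.measurable_sum _ fun i _ => hfm.comp (hTm.iterate i)

lemma measurable_birkhoffAverage (hTm : Measurable T) {f : X → ℝ} (hfm : Measurable f)
    (k : ℕ) : Measurable fun x => birkhoffAverage ℝ T f k x := by
  unfold birkhoffAverage
  simp only [smul_eq_mul]
  exact (measurable_birkhoffSum hTm hfm k).const_mul _

lemma birkhoffSum_sub_const (f : X → ℝ) (r : ℝ) (n : ℕ) (x : X) :
    birkhoffSum T (fun y => f y - r) n x = birkhoffSum T f n x - n * r := by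
  simp [birkhoffSum, Finset.sum_sub_distrib]

lemma birkhoffSum_const_sub (f : X → ℝ) (r : ℝ) (n : ℕ) (x : X) :
    birkhoffSum T (fun y => r - f y) n x = n * r - birkhoffSum T f n x := by
  simp [birkhoffSum, Finset.sum_sub_distrib]

/-- If `r < limsup Aₖ f x` then some Birkhoff sum of `f - r` is positive. -/
lemma exists_pos_birkhoffSum_of_lt_limsup {f : X → ℝ} {r : ℝ} {x : X}
    (h : (r : EReal) < limsup (fun k => ((birkhoffAverage ℝ T f k x : ℝ) : EReal)) atTop) :
    ∃ n : ℕ, 0 < birkhoffSum T (fun y => f y - r) (n + 1) x := by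
  by_contra hn
  push_neg at hn
  have hev : ∀ᶠ k : ℕ in atTop, ((birkhoffAverage ℝ T f k x : ℝ) : EReal) ≤ (r : EReal) := by
    filter_upwards [eventually_ge_atTop 1] with k hk
    obtain ⟨n, rfl⟩ : ∃ n, k = n + 1 := ⟨k - 1, by omega⟩
    have h1 := hn n
    rw [birkhoffSum_sub_const] at h1
    have h2 : birkhoffSum T f (n + 1) x ≤ ((n : ℝ) + 1) * r := by push_cast at h1 ⊢; linarith
    rw [← cast_mul_birkhoffAverage f (n + 1) x] at h2
    have hc : (0:ℝ) < (n:ℝ) + 1 := by positivity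
    have h3 : ((n:ℝ) + 1) * birkhoffAverage ℝ T f (n + 1) x ≤ ((n:ℝ) + 1) * r := by
      push_cast at h2 ⊢; linarith
    have : birkhoffAverage ℝ T f (n + 1) x ≤ r := le_of_mul_le_mul_left h3 hc
    exact_mod_cast this
  have : limsup (fun k => ((birkhoffAverage ℝ T f k x : ℝ) : EReal)) atTop ≤ (r : EReal) :=
    limsup_le_of_le (by isBoundedDefault) hev
  exact absurd (lt_of_lt_of_le h this) (lt_irrefl _)

/-- If `liminf Aₖ f x < a` then some Birkhoff sum of `a - f` is positive. -/
lemma exists_pos_birkhoffSum_of_liminf_lt {f : X → ℝ} {a : ℝ} {x : X}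
    (h : liminf (fun k => ((birkhoffAverage ℝ T f k x : ℝ) : EReal)) atTop < (a : EReal)) :
    ∃ n : ℕ, 0 < birkhoffSum T (fun y => a - f y) (n + 1) x := by
  by_contra hn
  push_neg at hn
  have hev : ∀ᶠ k : ℕ in atTop, (a : EReal) ≤ ((birkhoffAverage ℝ T f k x : ℝ) : EReal) := by
    filter_upwards [eventually_ge_atTop 1] with k hk
    obtain ⟨n, rfl⟩ : ∃ n, k = n + 1 := ⟨k - 1, by omega⟩
    have h1 := hn n
    rw [birkhoffSum_const_sub] at h1
    have h2 : ((n : ℝ) + 1) * a ≤ birkhoffSum T f (n + 1) x := by push_cast at h1 ⊢; linarith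
    rw [← cast_mul_birkhoffAverage f (n + 1) x] at h2
    have hc : (0:ℝ) < (n:ℝ) + 1 := by positivity
    have h3 : ((n:ℝ) + 1) * a ≤ ((n:ℝ) + 1) * birkhoffAverage ℝ T f (n + 1) x := by
      push_cast at h2 ⊢; linarith
    have : a ≤ birkhoffAverage ℝ T f (n + 1) x := le_of_mul_le_mul_left h3 hc
    exact_mod_cast this
  have : (a : EReal) ≤ liminf (fun k => ((birkhoffAverage ℝ T f k x : ℝ) : EReal)) atTop :=
    le_liminf_of_le (by isBoundedDefault) hev
  exact absurd (lt_of_le_of_lt this h) (lt_irrefl _)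

end BirkhoffAux

namespace BirkhoffAux

theorem aux_measurable {X : Type*} [MeasurableSpace X] (μ : Measure X)
    [IsProbabilityMeasure μ] (T : X → X) (hT : MeasurePreserving T μ μ)
    (f : X → ℝ) (hfm : Measurable f) (hf : Integrable f μ) :
    ∀ᵐ x ∂μ, ∃ L : ℝ,
      Tendsto (fun k => birkhoffAverage ℝ T f k x) atTop (nhds L) := by
  set ls : X → EReal := fun x =>
    limsup (fun k => ((birkhoffAverage ℝ T f k x : ℝ) : EReal)) atTop with hls
  set li : X → EReal := fun x =>
    liminf (fun k => ((birkhoffAverage ℝ T f k x : ℝ) : EReal)) atTop with hli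
  have hAm : ∀ k, Measurable fun x => ((birkhoffAverage ℝ T f k x : ℝ) : EReal) :=
    fun k => measurable_coe_real_ereal.comp (measurable_birkhoffAverage hT.measurable hfm k)
  have hlsm : Measurable ls := Measurable.limsup hAm
  have hlim : Measurable li := Measurable.liminf hAm
  have hlsT : ∀ x, ls (T x) = ls x := fun x => limsup_comp f x
  have hliT : ∀ x, li (T x) = li x := fun x => liminf_comp f x
  -- subtracted functions are integrable & measurable
  have hsub : ∀ r : ℝ, Integrable (fun y => f y - r) μ := fun r => hf.sub (integrable_const r)
  have hsubm : ∀ r : ℝ, Measurable (fun y => f y - r) := fun r => hfm.sub measurable_const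
  have hsub' : ∀ r : ℝ, Integrable (fun y => r - f y) μ := fun r => (integrable_const r).sub hf
  have hsubm' : ∀ r : ℝ, Measurable (fun y => r - f y) := fun r => measurable_const.sub hfm
  -- the three families of null sets
  -- (1) crossing sets
  have hcross : ∀ q r : ℚ, q < r →
      μ {x | li x < ((q:ℝ):EReal) ∧ ((r:ℝ):EReal) < ls x} = 0 := by
    intro q r hqr
    set E := {x | li x < ((q:ℝ):EReal) ∧ ((r:ℝ):EReal) < ls x} with hE
    have hEm : MeasurableSet E :=
      (hlim measurableSet_Iio).inter (hlsm measurableSet_Ioi)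
    have hTE : T ⁻¹' E = E := by
      ext x
      simp only [hE, Set.mem_preimage, Set.mem_setOf_eq, hlsT x, hliT x]
    have h1 : 0 ≤ ∫ x in E, (f x - (r:ℝ)) ∂μ := by
      refine maximal_ergodic_invariant hT (hsubm _) (hsub _) hEm hTE fun x hx => ?_
      exact exists_pos_birkhoffSum_of_lt_limsup hx.2
    have h2 : 0 ≤ ∫ x in E, ((q:ℝ) - f x) ∂μ := by
      refine maximal_ergodic_invariant hT (hsubm' _) (hsub' _) hEm hTE fun x hx => ?_
      exact exists_pos_birkhoffSum_of_liminf_lt hx.1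
    have hadd : ∫ x in E, (f x - (r:ℝ)) ∂μ + ∫ x in E, ((q:ℝ) - f x) ∂μ
        = ∫ x in E, ((q:ℝ) - (r:ℝ)) ∂μ := by
      rw [← integral_add ((hsub _).restrict) ((hsub' _).restrict)]
      congr 1
      funext x
      ring
    have hconst : ∫ x in E, ((q:ℝ) - (r:ℝ)) ∂μ = (μ E).toReal * ((q:ℝ) - (r:ℝ)) := by
      rw [setIntegral_const, smul_eq_mul]
      rfl
    have hqr' : ((q:ℝ) - (r:ℝ)) < 0 := by
      have : (q:ℝ) < (r:ℝ) := by exact_mod_cast hqr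
      linarith
    have h3 : 0 ≤ (μ E).toReal * ((q:ℝ) - (r:ℝ)) := by
      rw [← hconst, ← hadd]; linarith
    have h4 : (μ E).toReal = 0 := by nlinarith [ENNReal.toReal_nonneg (a := μ E)]
    rcases (ENNReal.toReal_eq_zero_iff _).1 h4 with h | h
    · exact h
    · exact absurd h (measure_ne_top μ E)
  -- (2) limsup = ⊤
  have htop : μ {x | ls x = ⊤} = 0 := by
    set E := {x | ls x = ⊤} with hE
    have hEm : MeasurableSet E := hlsm (measurableSet_singleton ⊤)
    have hTE : T ⁻¹' E = E := by
      ext x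
      simp only [hE, Set.mem_preimage, Set.mem_setOf_eq, hlsT x]
    by_contra hne
    have hc : 0 < (μ E).toReal :=
      ENNReal.toReal_pos hne (measure_ne_top μ E)
    have hint : ∀ n : ℕ, (n : ℝ) * (μ E).toReal ≤ ∫ x in E, f x ∂μ := by
      intro n
      have h1 : 0 ≤ ∫ x in E, (f x - (n:ℝ)) ∂μ := by
        refine maximal_ergodic_invariant hT (hsubm _) (hsub _) hEm hTE fun x hx => ?_
        refine exists_pos_birkhoffSum_of_lt_limsup ?_
        have hx' : ls x = ⊤ := hx
        show ((n:ℝ):EReal) < ls x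
        rw [hx']
        exact EReal.coe_lt_top _
      have h2 : ∫ x in E, (f x - (n:ℝ)) ∂μ
          = ∫ x in E, f x ∂μ - (μ E).toReal * (n:ℝ) := by
        rw [integral_sub hf.restrict (integrable_const _).integrableOn, setIntegral_const,
          smul_eq_mul]
        rfl
      rw [h2] at h1
      linarith
    obtain ⟨n, hn⟩ := exists_nat_gt ((∫ x in E, f x ∂μ) / (μ E).toReal)
    have := hint n
    rw [div_lt_iff₀ hc] at hn
    linarith
  -- (3) liminf = ⊥
  have hbot : μ {x | li x = ⊥} = 0 := by
    set E := {x | li x = ⊥} with hE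
    have hEm : MeasurableSet E := hlim (measurableSet_singleton ⊥)
    have hTE : T ⁻¹' E = E := by
      ext x
      simp only [hE, Set.mem_preimage, Set.mem_setOf_eq, hliT x]
    by_contra hne
    have hc : 0 < (μ E).toReal :=
      ENNReal.toReal_pos hne (measure_ne_top μ E)
    have hint : ∀ n : ℕ, ∫ x in E, f x ∂μ ≤ -(n : ℝ) * (μ E).toReal := by
      intro n
      have h1 : 0 ≤ ∫ x in E, (-(n:ℝ) - f x) ∂μ := by
        refine maximal_ergodic_invariant hT (hsubm' _) (hsub' _) hEm hTE fun x hx => ?_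
        refine exists_pos_birkhoffSum_of_liminf_lt ?_
        have hx' : li x = ⊥ := hx
        show li x < ((-(n:ℝ)):EReal)
        rw [hx']
        exact EReal.bot_lt_coe _
      have h2 : ∫ x in E, (-(n:ℝ) - f x) ∂μ
          = (μ E).toReal * (-(n:ℝ)) - ∫ x in E, f x ∂μ := by
        rw [integral_sub (integrable_const _).integrableOn hf.restrict, setIntegral_const,
          smul_eq_mul]
        rfl
      rw [h2] at h1
      linarith
    obtain ⟨n, hn⟩ := exists_nat_gt ((-(∫ x in E, f x ∂μ)) / (μ E).toReal)
    have := hint n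
    rw [div_lt_iff₀ hc] at hn
    linarith
  -- combine
  have hae1 : ∀ᵐ x ∂μ, ∀ q : ℚ, ∀ r : ℚ, q < r →
      ¬(li x < ((q:ℝ):EReal) ∧ ((r:ℝ):EReal) < ls x) := by
    rw [ae_all_iff]
    intro q
    rw [ae_all_iff]
    intro r
    by_cases hqr : q < r
    · have := hcross q r hqr
      rw [← compl_mem_ae_iff] at this
      filter_upwards [this] with x hx _ h
      exact hx h
    · exact Eventually.of_forall fun x h => absurd h hqr
  have hae2 : ∀ᵐ x ∂μ, ls x ≠ ⊤ := by
    rw [← compl_mem_ae_iff] at htop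
    filter_upwards [htop] with x hx
    exact hx
  have hae3 : ∀ᵐ x ∂μ, li x ≠ ⊥ := by
    rw [← compl_mem_ae_iff] at hbot
    filter_upwards [hbot] with x hx
    exact hx
  filter_upwards [hae1, hae2, hae3] with x h1 h2 h3
  have hle : li x ≤ ls x := liminf_le_limsup (by isBoundedDefault) (by isBoundedDefault)
  have heq : li x = ls x := by
    by_contra hne
    have hlt : li x < ls x := lt_of_le_of_ne hle hne
    obtain ⟨q, hq1, hq2⟩ := EReal.exists_rat_btwn_of_lt hlt
    obtain ⟨r, hr1, hr2⟩ := EReal.exists_rat_btwn_of_lt hq2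
    have hqr : q < r := by
      have : ((q:ℝ):EReal) < ((r:ℝ):EReal) := hr1
      exact_mod_cast this
    exact h1 q r hqr ⟨hq1, hr2⟩
  have hnbot : ls x ≠ ⊥ := by rw [← heq]; exact h3
  set L := ls x with hL
  lift L to ℝ using ⟨h2, hnbot⟩ with c hc
  have htends : Tendsto (fun k => ((birkhoffAverage ℝ T f k x : ℝ) : EReal)) atTop
      (nhds ((c : ℝ) : EReal)) := by
    refine tendsto_of_liminf_eq_limsup ?_ ?_ (by isBoundedDefault) (by isBoundedDefault)
    · exact heq
    · exact hc.symm
  exact ⟨c, EReal.tendsto_coe.1 htends⟩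

end BirkhoffAux

/-- **Pointwise (Birkhoff) Ergodic Theorem.**
If `T` preserves the probability measure `μ` and `f ∈ L¹(μ)`, then the Birkhoff
averages `A_k f = (1/k) ∑_{j<k} f ∘ T^j` converge `μ`-a.e. to a finite limit. -/
theorem pointwise_ergodic_theorem
    {X : Type*} [MeasurableSpace X] (μ : Measure X) [IsProbabilityMeasure μ]
    (T : X → X) (hT : MeasurePreserving T μ μ)
    (f : X → ℝ) (hf : Integrable f μ) :
    ∀ᵐ x ∂μ, ∃ L : ℝ,
      Tendsto (fun k => birkhoffAverage ℝ T f k x) atTop (nhds L) := by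
  set f' : X → ℝ := hf.1.mk f with hf'def
  have hf'm : Measurable f' := hf.1.stronglyMeasurable_mk.measurable
  have hf' : Integrable f' μ := hf.congr hf.1.ae_eq_mk
  have haeAll : ∀ᵐ x ∂μ, ∀ j : ℕ, f (T^[j] x) = f' (T^[j] x) := by
    rw [ae_all_iff]
    intro j
    have hj : (f ∘ T^[j]) =ᵐ[μ] (f' ∘ T^[j]) :=
      ae_eq_comp ((hT.iterate j).measurable.aemeasurable)
        (by rw [(hT.iterate j).map_eq]; exact hf.1.ae_eq_mk)
    exact hj
  filter_upwards [BirkhoffAux.aux_measurable μ T hT f' hf'm hf', haeAll] with x hx heqx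
  obtain ⟨L, hL⟩ := hx
  refine ⟨L, ?_⟩
  have heq : (fun k => birkhoffAverage ℝ T f k x) = fun k => birkhoffAverage ℝ T f' k x := by
    funext k
    unfold birkhoffAverage birkhoffSum
    congr 1
    exact Finset.sum_congr rfl fun j _ => heqx j
  rw [heq]
  exact hL
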